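/- Let (Ω, 𝓕, P) be a probability space with a filtration (𝓕_i)_{i∈ℕ}, and let (W_i)_{i∈ℕ} be an adapted sequence of nonnegative integrable random variables. Let C > 1 and assume that for every i ≥ 1, E[W_i | 𝓕_{i−1}] ≤ (1 − 1/C) W_{i−1} + C almost surely. Set C₁ = C(2C + 2), η = 2/(2 − 1/C), and let ρ = inf{ i ≥ 0 : W_i ≤ C₁ } (with ρ = ∞ if no such i exists). If W_0 = x almost surely for a constant x > C₁, then E[η^ρ] ≤ x; in particular ρ < ∞ almost surely. -/

import Mathlib

open MeasureTheory Classical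

lemma annex_sInf_eq_iff (S : Set ℕ) (k : ℕ) :
    sInf S = k ↔ (k ∈ S ∧ ∀ j < k, j ∉ S) ∨ (S = ∅ ∧ k = 0) := by
  constructor
  · rintro rfl
    rcases S.eq_empty_or_nonempty with h | h
    · exact Or.inr ⟨h, by simp [h, Nat.sInf_empty]⟩
    · exact Or.inl ⟨Nat.sInf_mem h, fun j hj => Nat.notMem_of_lt_sInf hj⟩
  · rintro (⟨hk, hlt⟩ | ⟨rfl, rfl⟩)
    · refine le_antisymm (Nat.sInf_le hk) ?_
      by_contra h
      push_neg at h
      exact hlt _ h (Nat.sInf_mem ⟨k, hk⟩)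
    · exact Nat.sInf_empty

lemma annex_key_ineq {C w : ℝ} (hC : 1 < C) (hw : C * (2 * C + 2) ≤ w) :
    (2 / (2 - 1 / C)) * ((1 - 1 / C) * w + C + 1) ≤ w := by
  have hC0 : 0 < C := by linarith
  have hu0 : 0 < 1 / C := by positivity
  have hu1 : 1 / C < 1 := by rw [div_lt_one hC0]; linarith
  have hden : 0 < 2 - 1 / C := by linarith
  rw [div_mul_eq_mul_div, div_le_iff₀ hden]
  have h3 : 1 / C * C = 1 := by field_simp
  nlinarith [mul_le_mul_of_nonneg_left hw hu0.le]

lemma annex_measurable_hit {Ω : Type*} [MeasurableSpace Ω] {W : ℕ → Ω → ℝ}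
    (hW : ∀ k, Measurable (W k)) (c : ℝ) :
    Measurable (fun ω => sInf {i | W i ω ≤ c}) := by
  apply measurable_to_countable'
  intro k
  have h : (fun ω => sInf {i | W i ω ≤ c}) ⁻¹' {k} =
      ({ω | W k ω ≤ c} ∩ ⋂ j ∈ Set.Iio k, {ω | ¬ W j ω ≤ c}) ∪
      ((⋂ i, {ω | ¬ W i ω ≤ c}) ∩ {ω | k = 0}) := by
    ext ω
    simp only [Set.mem_preimage, Set.mem_singleton_iff, annex_sInf_eq_iff, Set.mem_union,
      Set.mem_inter_iff, Set.mem_iInter, Set.mem_setOf_eq, Set.eq_empty_iff_forall_notMem,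
      Set.mem_Iio]
  rw [h]
  refine MeasurableSet.union (MeasurableSet.inter (measurableSet_le (hW k) measurable_const) ?_)
    (MeasurableSet.inter (MeasurableSet.iInter fun i =>
      (measurableSet_le (hW i) measurable_const).compl) ?_)
  · exact MeasurableSet.biInter (Set.to_countable _) fun j _ =>
      (measurableSet_le (hW j) measurable_const).compl
  · by_cases hk : k = 0 <;> simp [hk]

/-- Part 1 of Lemma "annex": for an adapted nonnegative process satisfying the
Foster–Lyapunov drift condition with constants `(1 - 1/C, C)` and started at a
constant `x > C₁ = C(2C+2)`, the first hitting time `ρ` of `{W ≤ C₁}` satisfies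
`E[η^ρ] ≤ x` with `η = 2/(2 - 1/C)` (the integrand is `∞` when `ρ = ∞`);
in particular `ρ < ∞` almost surely. -/
theorem hitting_time_exp_moment {Ω : Type*} {m0 : MeasurableSpace Ω}
    (μ : Measure Ω) [IsProbabilityMeasure μ]
    (𝓕 : Filtration ℕ m0) (W : ℕ → Ω → ℝ)
    (hadapt : Adapted 𝓕 W) (hnonneg : ∀ i ω, 0 ≤ W i ω)
    (hint : ∀ i, Integrable (W i) μ)
    (C : ℝ) (hC : 1 < C)
    (hdrift : ∀ i : ℕ, 1 ≤ i →
      ∀ᵐ ω ∂μ, (μ[W i | 𝓕 (i - 1)]) ω ≤ (1 - 1 / C) * W (i - 1) ω + C)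
    (x : ℝ) (hx : C * (2 * C + 2) < x)
    (hW0 : ∀ᵐ ω ∂μ, W 0 ω = x) :
    (∫⁻ ω, (if {i : ℕ | W i ω ≤ C * (2 * C + 2)}.Nonempty
        then ENNReal.ofReal
          ((2 / (2 - 1 / C)) ^ sInf {i : ℕ | W i ω ≤ C * (2 * C + 2)})
        else ⊤) ∂μ) ≤ ENNReal.ofReal x ∧
      ∀ᵐ ω ∂μ, ∃ i : ℕ, W i ω ≤ C * (2 * C + 2) := by
  have hC0 : (0:ℝ) < C := by linarith
  set C₁ : ℝ := C * (2 * C + 2) with hC₁def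
  set η : ℝ := 2 / (2 - 1 / C) with hηdef
  have hu0 : 0 < 1 / C := by positivity
  have hu1 : 1 / C < 1 := by rw [div_lt_one hC0]; linarith
  have hden : 0 < 2 - 1 / C := by linarith
  have hη1 : 1 < η := by rw [hηdef, lt_div_iff₀ hden]; linarith
  have hη0 : 0 < η := by linarith
  have hC₁0 : 0 < C₁ := by rw [hC₁def]; positivity
  -- measurability
  have hWm : ∀ k, Measurable (W k) := fun k => ((hadapt k).mono (𝓕.le k) le_rfl)
  have hρm : Measurable (fun ω => sInf {i | W i ω ≤ C₁}) := annex_measurable_hit hWm C₁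
  have hAmF : ∀ n : ℕ, MeasurableSet[𝓕 n] {ω | ∀ k ≤ n, C₁ < W k ω} := by
    intro n
    have h : {ω | ∀ k ≤ n, C₁ < W k ω} = ⋂ k ∈ Set.Iic n, {ω | C₁ < W k ω} := by
      ext ω; simp
    rw [h]
    refine MeasurableSet.biInter (Set.to_countable _) fun k hk => ?_
    exact measurableSet_lt measurable_const ((hadapt k).mono (𝓕.mono hk) le_rfl)
  have hAm : ∀ n : ℕ, MeasurableSet {ω | ∀ k ≤ n, C₁ < W k ω} := fun n => 𝓕.le n _ (hAmF n)
  -- basic facts about the hitting index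
  have hρ_le : ∀ (n : ℕ) ω, ¬ (∀ k ≤ n, C₁ < W k ω) → sInf {i | W i ω ≤ C₁} ≤ n := by
    intro n ω h
    push_neg at h
    obtain ⟨k, hk, hkC⟩ := h
    exact (Nat.sInf_le hkC).trans hk
  -- the auxiliary supermartingale-like process
  set Y : ℕ → Ω → ℝ := fun n ω => if ∀ k ≤ n, C₁ < W k ω then η ^ n * W n ω
    else η ^ sInf {i | W i ω ≤ C₁} with hYdef
  have hYnn : ∀ n ω, 0 ≤ Y n ω := by
    intro n ω
    simp only [hYdef]
    split
    · exact mul_nonneg (pow_nonneg hη0.le n) (hnonneg n ω)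
    · exact pow_nonneg hη0.le _
  have hYle : ∀ n ω, Y n ω ≤ η ^ n * (W n ω + 1) := by
    intro n ω
    have hp : (0:ℝ) ≤ η ^ n := pow_nonneg hη0.le n
    simp only [hYdef]
    split
    · nlinarith [hnonneg n ω]
    · next h =>
      calc η ^ sInf {i | W i ω ≤ C₁} ≤ η ^ n := pow_le_pow_right₀ hη1.le (hρ_le n ω h)
        _ ≤ η ^ n * (W n ω + 1) :=
            le_mul_of_one_le_right hp (by linarith [hnonneg n ω])
  have hYm : ∀ n, Measurable (Y n) := by
    intro n
    simp only [hYdef]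
    exact Measurable.ite (hAm n) (measurable_const.mul (hWm n))
      ((measurable_from_top (f := fun k : ℕ => η ^ k)).comp hρm)
  have hYint : ∀ n, Integrable (Y n) μ := by
    intro n
    refine Integrable.mono' (((hint n).add (integrable_const 1)).const_mul (η ^ n))
      (hYm n).aestronglyMeasurable (ae_of_all _ fun ω => ?_)
    rw [Real.norm_eq_abs, abs_of_nonneg (hYnn n ω)]
    exact hYle n ω
  have hY0 : ∫ ω, Y 0 ω ∂μ = x := by
    have h0 : Y 0 =ᵐ[μ] fun _ => x := by
      filter_upwards [hW0] with ω hω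
      have hc : ∀ k ≤ 0, C₁ < W k ω := by
        intro k hk
        rw [Nat.le_zero.mp hk, hω]
        exact hx
      simp only [hYdef, if_pos hc, pow_zero, one_mul, hω]
    rw [integral_congr_ae h0, integral_const, probReal_univ, one_smul]
  -- the main induction
  have hYx : ∀ n, ∫ ω, Y n ω ∂μ ≤ x := by
    intro n
    induction n with
    | zero => exact le_of_eq hY0
    | succ n ih =>
      have hrhsInt : Integrable (fun ω => (1 - 1 / C) * W n ω + C) μ :=
        ((hint n).const_mul _).add (integrable_const C)
      have hrhs1Int : Integrable (fun ω => (1 - 1 / C) * W n ω + C + 1) μ :=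
        hrhsInt.add (integrable_const 1)
      set Z : Ω → ℝ := fun ω => if ∀ k ≤ n, C₁ < W k ω then η ^ (n+1) * (W (n+1) ω + 1)
        else Y n ω with hZdef
      have hZm : Measurable Z := by
        simp only [hZdef]
        exact Measurable.ite (hAm n)
          (measurable_const.mul ((hWm (n+1)).add measurable_const)) (hYm n)
      have hZint : Integrable Z μ := by
        refine Integrable.mono'
          ((((hint (n+1)).add (integrable_const 1)).const_mul (η ^ (n+1))).add
            (((hint n).add (integrable_const 1)).const_mul (η ^ n)))
          hZm.aestronglyMeasurable (ae_of_all _ fun ω => ?_)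
        have hp1 : (0:ℝ) ≤ η ^ (n+1) := pow_nonneg hη0.le _
        have hp2 : (0:ℝ) ≤ η ^ n := pow_nonneg hη0.le _
        have h1 : (0:ℝ) ≤ η ^ (n+1) * (W (n+1) ω + 1) := by nlinarith [hnonneg (n+1) ω]
        have h2 : (0:ℝ) ≤ η ^ n * (W n ω + 1) := by nlinarith [hnonneg n ω]
        rw [Real.norm_eq_abs]
        simp only [hZdef, Pi.add_apply]
        split
        · rw [abs_of_nonneg h1]; linarith
        · rw [abs_of_nonneg (hYnn n ω)]; linarith [hYle n ω]
      have hstep1 : ∫ ω, Y (n+1) ω ∂μ ≤ ∫ ω, Z ω ∂μ := by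
        refine integral_mono (hYint (n+1)) hZint fun ω => ?_
        simp only [hYdef, hZdef]
        by_cases hA : ∀ k ≤ n, C₁ < W k ω
        · rw [if_pos hA]
          by_cases hB : ∀ k ≤ n+1, C₁ < W k ω
          · rw [if_pos hB]
            have hp1 : (0:ℝ) ≤ η ^ (n+1) := pow_nonneg hη0.le _
            nlinarith
          · rw [if_neg hB]
            calc η ^ sInf {i | W i ω ≤ C₁} ≤ η ^ (n+1) :=
                  pow_le_pow_right₀ hη1.le (hρ_le (n+1) ω hB)
              _ ≤ η ^ (n+1) * (W (n+1) ω + 1) :=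
                  le_mul_of_one_le_right (pow_nonneg hη0.le _)
                    (by linarith [hnonneg (n+1) ω])
        · have hB : ¬ ∀ k ≤ n+1, C₁ < W k ω :=
            fun hB => hA fun k hk => hB k (hk.trans (Nat.le_succ n))
          rw [if_neg hB, if_neg hA, if_neg hA]
      have hcond := hdrift (n+1) (Nat.le_add_left 1 n)
      simp only [Nat.add_sub_cancel] at hcond
      have h2 : ∫ ω in {ω | ∀ k ≤ n, C₁ < W k ω}, W (n+1) ω ∂μ
          ≤ ∫ ω in {ω | ∀ k ≤ n, C₁ < W k ω}, ((1 - 1 / C) * W n ω + C) ∂μ := by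
        rw [← setIntegral_condExp (𝓕.le n) (hint (n+1)) (hAmF n)]
        exact setIntegral_mono_ae integrable_condExp.integrableOn hrhsInt.integrableOn hcond
      have key : ∀ ω ∈ {ω | ∀ k ≤ n, C₁ < W k ω},
          η ^ (n+1) * ((1 - 1 / C) * W n ω + C + 1) ≤ η ^ n * W n ω := by
        intro ω hω
        have hw : C₁ ≤ W n ω := (hω n le_rfl).le
        rw [hC₁def] at hw
        have hk := annex_key_ineq hC hw
        rw [← hηdef] at hk
        calc η ^ (n+1) * ((1 - 1 / C) * W n ω + C + 1)
            = η ^ n * (η * ((1 - 1 / C) * W n ω + C + 1)) := by ring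
          _ ≤ η ^ n * W n ω := mul_le_mul_of_nonneg_left hk (pow_nonneg hη0.le n)
      have hμlt : μ {ω | ∀ k ≤ n, C₁ < W k ω} < ⊤ := measure_lt_top μ _
      have hA1 : ∫ ω in {ω | ∀ k ≤ n, C₁ < W k ω}, η ^ (n+1) * (W (n+1) ω + 1) ∂μ
          = η ^ (n+1) * ((∫ ω in {ω | ∀ k ≤ n, C₁ < W k ω}, W (n+1) ω ∂μ)
            + (μ {ω | ∀ k ≤ n, C₁ < W k ω}).toReal) := by
        rw [integral_const_mul]
        congr 1
        rw [integral_add ((hint (n+1)).integrableOn)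
          (integrableOn_const hμlt.ne)]
        simp [Measure.restrict_apply_univ, Measure.real]
      have hA2 : η ^ (n+1) * ((∫ ω in {ω | ∀ k ≤ n, C₁ < W k ω}, ((1 - 1 / C) * W n ω + C) ∂μ)
            + (μ {ω | ∀ k ≤ n, C₁ < W k ω}).toReal)
          = ∫ ω in {ω | ∀ k ≤ n, C₁ < W k ω}, η ^ (n+1) * ((1 - 1 / C) * W n ω + C + 1) ∂μ := by
        rw [integral_const_mul]
        congr 1
        rw [integral_add (hrhsInt.integrableOn) (integrableOn_const hμlt.ne)]
        simp [Measure.restrict_apply_univ, Measure.real]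
      have hA3 : ∫ ω in {ω | ∀ k ≤ n, C₁ < W k ω}, η ^ (n+1) * ((1 - 1 / C) * W n ω + C + 1) ∂μ
          ≤ ∫ ω in {ω | ∀ k ≤ n, C₁ < W k ω}, Y n ω ∂μ := by
        refine setIntegral_mono_on ((hrhs1Int.const_mul (η ^ (n+1))).integrableOn)
          ((hYint n).integrableOn) (hAm n) fun ω hω => ?_
        have hYn : Y n ω = η ^ n * W n ω := by
          simp only [hYdef]; rw [if_pos (show ∀ k ≤ n, C₁ < W k ω from hω)]
        rw [hYn]
        exact key ω hω
      have hstep2 : ∫ ω, Z ω ∂μ ≤ ∫ ω, Y n ω ∂μ := by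
        rw [← integral_add_compl (hAm n) hZint, ← integral_add_compl (hAm n) (hYint n)]
        have hcongr1 : ∫ ω in {ω | ∀ k ≤ n, C₁ < W k ω}, Z ω ∂μ
            = ∫ ω in {ω | ∀ k ≤ n, C₁ < W k ω}, η ^ (n+1) * (W (n+1) ω + 1) ∂μ :=
          setIntegral_congr_fun (hAm n) fun ω hω => by simp only [hZdef]; rw [if_pos (show ∀ k ≤ n, C₁ < W k ω from hω)]
        have hcongr2 : ∫ ω in {ω | ∀ k ≤ n, C₁ < W k ω}ᶜ, Z ω ∂μ
            = ∫ ω in {ω | ∀ k ≤ n, C₁ < W k ω}ᶜ, Y n ω ∂μ :=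
          setIntegral_congr_fun (hAm n).compl fun ω hω => by simp only [hZdef]; rw [if_neg (show ¬ ∀ k ≤ n, C₁ < W k ω from hω)]
        rw [hcongr1, hcongr2]
        refine add_le_add ?_ le_rfl
        calc ∫ ω in {ω | ∀ k ≤ n, C₁ < W k ω}, η ^ (n+1) * (W (n+1) ω + 1) ∂μ
            = η ^ (n+1) * ((∫ ω in {ω | ∀ k ≤ n, C₁ < W k ω}, W (n+1) ω ∂μ)
              + (μ {ω | ∀ k ≤ n, C₁ < W k ω}).toReal) := hA1
          _ ≤ η ^ (n+1) * ((∫ ω in {ω | ∀ k ≤ n, C₁ < W k ω}, ((1 - 1 / C) * W n ω + C) ∂μ)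
              + (μ {ω | ∀ k ≤ n, C₁ < W k ω}).toReal) := by
              have hp : (0:ℝ) ≤ η ^ (n+1) := pow_nonneg hη0.le _
              exact mul_le_mul_of_nonneg_left (add_le_add h2 le_rfl) hp
          _ = ∫ ω in {ω | ∀ k ≤ n, C₁ < W k ω}, η ^ (n+1) * ((1 - 1 / C) * W n ω + C + 1) ∂μ := hA2
          _ ≤ ∫ ω in {ω | ∀ k ≤ n, C₁ < W k ω}, Y n ω ∂μ := hA3
      exact (hstep1.trans hstep2).trans ih
  -- tail bound
  have htail : ∀ n : ℕ, (μ {ω | ∀ k ≤ n, C₁ < W k ω}).toReal * (η ^ n * C₁) ≤ x := by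
    intro n
    have hind : ∀ ω, Set.indicator {ω | ∀ k ≤ n, C₁ < W k ω} (fun _ => η ^ n * C₁) ω ≤ Y n ω := by
      intro ω
      by_cases hω : ∀ k ≤ n, C₁ < W k ω
      · rw [Set.indicator_of_mem (show ω ∈ {ω | ∀ k ≤ n, C₁ < W k ω} from hω)]
        have hYn : Y n ω = η ^ n * W n ω := by simp only [hYdef]; rw [if_pos hω]
        rw [hYn]
        exact mul_le_mul_of_nonneg_left (hω n le_rfl).le (pow_nonneg hη0.le n)
      · rw [Set.indicator_of_notMem (show ω ∉ {ω | ∀ k ≤ n, C₁ < W k ω} from hω)]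
        exact hYnn n ω
    have hmono := integral_mono ((integrable_const _).indicator (hAm n)) (hYint n) hind
    rw [integral_indicator_const _ (hAm n)] at hmono
    have := hmono.trans (hYx n)
    rw [smul_eq_mul] at this
    exact this
  have hAμ : ∀ n : ℕ, μ {ω | ∀ k ≤ n, C₁ < W k ω} ≤ ENNReal.ofReal (x / (η ^ n * C₁)) := by
    intro n
    have hpos : 0 < η ^ n * C₁ := by positivity
    have h1 : (μ {ω | ∀ k ≤ n, C₁ < W k ω}).toReal ≤ x / (η ^ n * C₁) :=
      (le_div_iff₀ hpos).mpr (htail n)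
    calc μ {ω | ∀ k ≤ n, C₁ < W k ω}
        = ENNReal.ofReal (μ {ω | ∀ k ≤ n, C₁ < W k ω}).toReal :=
          (ENNReal.ofReal_toReal (measure_ne_top μ _)).symm
      _ ≤ ENNReal.ofReal (x / (η ^ n * C₁)) := ENNReal.ofReal_le_ofReal h1
  have hNnull : μ (⋂ n : ℕ, {ω | ∀ k ≤ n, C₁ < W k ω}) = 0 := by
    have hle : ∀ n : ℕ, μ (⋂ m : ℕ, {ω | ∀ k ≤ m, C₁ < W k ω})
        ≤ ENNReal.ofReal (x / (η ^ n * C₁)) :=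
      fun n => (measure_mono (Set.iInter_subset _ n)).trans (hAμ n)
    have hfun : (fun n : ℕ => x / (η ^ n * C₁)) = fun n : ℕ => (x / C₁) * (1 / η) ^ n := by
      funext n
      have h1 : η ≠ 0 := ne_of_gt hη0
      have h2 : C₁ ≠ 0 := ne_of_gt hC₁0
      have h3 : η ^ n ≠ 0 := pow_ne_zero n h1
      field_simp
      rw [one_div_pow, mul_assoc, mul_one_div_cancel h3, mul_one]
    have htend : Filter.Tendsto (fun n : ℕ => ENNReal.ofReal (x / (η ^ n * C₁)))
        Filter.atTop (nhds 0) := by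
      rw [show (0:ENNReal) = ENNReal.ofReal 0 by simp]
      apply ENNReal.tendsto_ofReal
      rw [hfun]
      have h01 : (0:ℝ) ≤ 1 / η := by positivity
      have h11 : 1 / η < 1 := by rw [div_lt_one hη0]; exact hη1
      simpa using (tendsto_pow_atTop_nhds_zero_of_lt_one h01 h11).const_mul (x / C₁)
    exact le_antisymm (ge_of_tendsto' htend hle) zero_le
  -- almost sure hitting
  have hae2 : ∀ᵐ ω ∂μ, ∃ i : ℕ, W i ω ≤ C₁ := by
    rw [ae_iff]
    refine measure_mono_null (fun ω hω => ?_) hNnull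
    simp only [Set.mem_setOf_eq, not_exists] at hω
    exact Set.mem_iInter.mpr fun n => fun k _ => not_le.mp (hω k)
  refine ⟨?_, hae2⟩
  -- the lintegral bound
  have hGm : Measurable (fun ω => ENNReal.ofReal (η ^ sInf {i | W i ω ≤ C₁})) :=
    ENNReal.measurable_ofReal.comp ((measurable_from_top (f := fun k : ℕ => η ^ k)).comp hρm)
  have hgn_m : ∀ n : ℕ, Measurable (Set.indicator {ω | ∀ k ≤ n, C₁ < W k ω}ᶜ
      (fun ω => ENNReal.ofReal (η ^ sInf {i | W i ω ≤ C₁}))) :=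
    fun n => hGm.indicator (hAm n).compl
  have hmono : Monotone (fun n : ℕ => Set.indicator {ω | ∀ k ≤ n, C₁ < W k ω}ᶜ
      (fun ω => ENNReal.ofReal (η ^ sInf {i | W i ω ≤ C₁}))) := by
    intro m n hmn
    refine Set.indicator_le_indicator_of_subset ?_ (fun ω => zero_le)
    exact Set.compl_subset_compl.mpr fun ω hω k hk => hω k (hk.trans hmn)
  have haeeq : (fun ω => if {i : ℕ | W i ω ≤ C₁}.Nonempty
        then ENNReal.ofReal (η ^ sInf {i : ℕ | W i ω ≤ C₁}) else ⊤)
      =ᵐ[μ] fun ω => ⨆ n : ℕ, Set.indicator {ω | ∀ k ≤ n, C₁ < W k ω}ᶜ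
        (fun ω => ENNReal.ofReal (η ^ sInf {i | W i ω ≤ C₁})) ω := by
    filter_upwards [measure_eq_zero_iff_ae_notMem.mp hNnull] with ω hω
    rw [Set.mem_iInter] at hω
    push_neg at hω
    obtain ⟨n, hn⟩ := hω
    have hne : {i : ℕ | W i ω ≤ C₁}.Nonempty := by
      by_contra hne
      exact hn fun k _ => not_le.mp fun hc => hne ⟨k, hc⟩
    rw [if_pos hne]
    refine le_antisymm (le_iSup_of_le n ?_) (iSup_le fun m => Set.indicator_le_self _ _ ω)
    rw [Set.indicator_of_mem (show ω ∈ {ω | ∀ k ≤ n, C₁ < W k ω}ᶜ from hn)]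
  calc ∫⁻ ω, (if {i : ℕ | W i ω ≤ C₁}.Nonempty
        then ENNReal.ofReal (η ^ sInf {i : ℕ | W i ω ≤ C₁}) else ⊤) ∂μ
      = ∫⁻ ω, ⨆ n : ℕ, Set.indicator {ω | ∀ k ≤ n, C₁ < W k ω}ᶜ
          (fun ω => ENNReal.ofReal (η ^ sInf {i | W i ω ≤ C₁})) ω ∂μ :=
        lintegral_congr_ae haeeq
    _ = ⨆ n : ℕ, ∫⁻ ω, Set.indicator {ω | ∀ k ≤ n, C₁ < W k ω}ᶜ
          (fun ω => ENNReal.ofReal (η ^ sInf {i | W i ω ≤ C₁})) ω ∂μ :=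
        lintegral_iSup hgn_m hmono
    _ ≤ ENNReal.ofReal x := by
        refine iSup_le fun n => ?_
        have hIOn : IntegrableOn (fun ω => η ^ sInf {i | W i ω ≤ C₁})
            ({ω | ∀ k ≤ n, C₁ < W k ω}ᶜ) μ := by
          refine Integrable.mono' (integrable_const (η ^ n))
            (((measurable_from_top (f := fun k : ℕ => η ^ k)).comp hρm).aestronglyMeasurable) ?_
          rw [ae_restrict_iff' (hAm n).compl]
          refine ae_of_all _ fun ω hω => ?_
          rw [Real.norm_eq_abs, abs_of_nonneg (pow_nonneg hη0.le _)]
          exact pow_le_pow_right₀ hη1.le (hρ_le n ω hω)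
        have hnn' : 0 ≤ᵐ[μ.restrict {ω | ∀ k ≤ n, C₁ < W k ω}ᶜ]
            fun ω => η ^ sInf {i | W i ω ≤ C₁} :=
          ae_of_all _ fun ω => pow_nonneg hη0.le _
        rw [lintegral_indicator (hAm n).compl,
          ← ofReal_integral_eq_lintegral_ofReal hIOn hnn']
        apply ENNReal.ofReal_le_ofReal
        have hYcompl : ∫ ω in {ω | ∀ k ≤ n, C₁ < W k ω}ᶜ, (η ^ sInf {i | W i ω ≤ C₁} : ℝ) ∂μ
            = ∫ ω in {ω | ∀ k ≤ n, C₁ < W k ω}ᶜ, Y n ω ∂μ :=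
          (setIntegral_congr_fun (hAm n).compl fun ω hω => by
            simp only [hYdef]; rw [if_neg (show ¬ ∀ k ≤ n, C₁ < W k ω from hω)]).symm
        have h0 : 0 ≤ ∫ ω in {ω | ∀ k ≤ n, C₁ < W k ω}, Y n ω ∂μ :=
          setIntegral_nonneg (hAm n) fun ω _ => hYnn n ω
        have hx' := hYx n
        rw [← integral_add_compl (hAm n) (hYint n)] at hx'
        rw [hYcompl]
        linarith
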